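/- Let n ≥ 2, let A be a linear subspace of ℝ^n of dimension d ∈ [1, n−1], and let j ∈ [1, min(d, n−d)]. If A is (n−d, j)-irrational, then for every e ∈ [j, n−j] the subspace A is (e, j)-irrational. -/

import Mathlib

noncomputable section

/-- A subspace of `ℝ^n` is rational if it is spanned by vectors with rational coordinates. -/
def IsRationalSubspace {n : ℕ} (B : Submodule ℝ (EuclideanSpace ℝ (Fin n))) : Prop :=
  ∃ s : Set (EuclideanSpace ℝ (Fin n)),
    (∀ v ∈ s, ∀ i, ∃ q : ℚ, v i = (q : ℝ)) ∧ Submodule.span ℝ s = B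

/-- `A` is `(e, j)`-irrational: every rational subspace `B` of dimension `e` satisfies
`dim (A ∩ B) < j + max 0 (dim A + e - n)` (here `dim A + e - n` is truncated
subtraction, which equals `max 0 (dim A + e - n)`). -/
def IsIrrational {n : ℕ} (A : Submodule ℝ (EuclideanSpace ℝ (Fin n))) (e j : ℕ) : Prop :=
  ∀ B : Submodule ℝ (EuclideanSpace ℝ (Fin n)),
    IsRationalSubspace B → Module.finrank ℝ B = e →
      Module.finrank ℝ ↥(A ⊓ B) < j + (Module.finrank ℝ A + e - n)

open Submodule Module Set

/-- A rational subspace has a finite rational linearly independent spanning set. -/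
lemma exists_rat_basis_finset {n : ℕ} {B : Submodule ℝ (EuclideanSpace ℝ (Fin n))}
    (hB : IsRationalSubspace B) :
    ∃ t : Finset (EuclideanSpace ℝ (Fin n)),
      (∀ v ∈ t, ∀ i, ∃ q : ℚ, v i = (q : ℝ)) ∧
      LinearIndependent ℝ ((↑) : ↥(t : Set (EuclideanSpace ℝ (Fin n))) → EuclideanSpace ℝ (Fin n)) ∧
      Submodule.span ℝ (t : Set (EuclideanSpace ℝ (Fin n))) = B ∧
      t.card = Module.finrank ℝ B := by
  obtain ⟨s, hs, hspan⟩ := hB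
  obtain ⟨b, hbs, hbspan, hbli⟩ := exists_linearIndependent ℝ s
  have hfin : b.Finite := hbli.setFinite
  haveI := hfin.fintype
  refine ⟨hfin.toFinset, ?_, ?_, ?_, ?_⟩
  · intro v hv i
    exact hs v (hbs (hfin.mem_toFinset.mp hv)) i
  · rwa [hfin.coe_toFinset]
  · rw [hfin.coe_toFinset, hbspan, hspan]
  · rw [← hspan, ← hbspan, finrank_span_set_eq_card hbli, Set.toFinset_card,
      hfin.card_toFinset]

/-- Shrink a rational subspace to a rational subspace of any smaller dimension. -/
lemma exists_rat_le {n : ℕ} {B : Submodule ℝ (EuclideanSpace ℝ (Fin n))}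
    (hB : IsRationalSubspace B) {m : ℕ} (hm : m ≤ Module.finrank ℝ B) :
    ∃ B' : Submodule ℝ (EuclideanSpace ℝ (Fin n)),
      IsRationalSubspace B' ∧ B' ≤ B ∧ Module.finrank ℝ B' = m := by
  obtain ⟨t, ht, hli, hspan, hcard⟩ := exists_rat_basis_finset hB
  obtain ⟨u, hut, hucard⟩ := Finset.exists_subset_card_eq (hcard ▸ hm)
  refine ⟨Submodule.span ℝ (u : Set (EuclideanSpace ℝ (Fin n))),
    ⟨u, fun v hv i => ht v (hut hv) i, rfl⟩, ?_, ?_⟩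
  · rw [← hspan]; exact Submodule.span_mono (by exact_mod_cast hut)
  · rw [finrank_span_finset_eq_card (LinearIndepOn.mono (v := id) hli (by exact_mod_cast hut)), hucard]

/-- Extend a rational subspace to a rational subspace of any larger dimension `≤ n`. -/
lemma exists_rat_ge {n : ℕ} {B : Submodule ℝ (EuclideanSpace ℝ (Fin n))}
    (hB : IsRationalSubspace B) {m : ℕ} (hm : Module.finrank ℝ B ≤ m) (hmn : m ≤ n) :
    ∃ B' : Submodule ℝ (EuclideanSpace ℝ (Fin n)),
      IsRationalSubspace B' ∧ B ≤ B' ∧ Module.finrank ℝ B' = m := by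
  classical
  obtain ⟨t, ht, hli, hspan, hcard⟩ := exists_rat_basis_finset hB
  set S : Set (EuclideanSpace ℝ (Fin n)) :=
    (t : Set (EuclideanSpace ℝ (Fin n))) ∪
      Set.range (fun i : Fin n => EuclideanSpace.single i (1 : ℝ)) with hS
  have hSrat : ∀ v ∈ S, ∀ i, ∃ q : ℚ, v i = (q : ℝ) := by
    rintro v (hv | ⟨i, rfl⟩) k
    · exact ht v hv k
    · refine ⟨if k = i then 1 else 0, ?_⟩
      show EuclideanSpace.single i (1 : ℝ) k = _
      rw [EuclideanSpace.single_apply]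
      split <;> simp
  have hSspan : Submodule.span ℝ S = ⊤ := by
    rw [eq_top_iff, ← (EuclideanSpace.basisFun (Fin n) ℝ).toBasis.span_eq]
    refine Submodule.span_le.mpr ?_
    intro v hv
    obtain ⟨i, rfl⟩ := hv
    apply Submodule.subset_span
    right
    exact ⟨i, by simp [EuclideanSpace.basisFun_apply]⟩
  obtain ⟨b, hbS, htb, hSb, hbli⟩ :=
    exists_linearIndepOn_id_extension hli (Set.subset_union_left (s := _) (t := _))
  have hbspan : Submodule.span ℝ b = ⊤ := by
    rw [eq_top_iff, ← hSspan]
    exact Submodule.span_le.mpr hSb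
  have hbfin : b.Finite := LinearIndependent.setFinite hbli
  haveI := hbfin.fintype
  have hbcard : hbfin.toFinset.card = n := by
    have := finrank_span_set_eq_card hbli
    rw [hbspan, finrank_top, finrank_euclideanSpace_fin] at this
    rw [hbfin.card_toFinset, ← Set.toFinset_card]; exact this.symm
  have htsub : t ⊆ hbfin.toFinset := fun x hx => hbfin.mem_toFinset.mpr (htb hx)
  obtain ⟨u, htu, hub, hucard⟩ :=
    Finset.exists_subsuperset_card_eq htsub (hcard ▸ hm) (by rw [hbcard]; exact hmn)
  have huB : (u : Set (EuclideanSpace ℝ (Fin n))) ⊆ b := by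
    intro x hx
    exact hbfin.mem_toFinset.mp (hub hx)
  refine ⟨Submodule.span ℝ (u : Set (EuclideanSpace ℝ (Fin n))),
    ⟨u, fun v hv i => hSrat v (hbS (huB hv)) i, rfl⟩, ?_, ?_⟩
  · rw [← hspan]; exact Submodule.span_mono (by exact_mod_cast htu)
  · rw [finrank_span_finset_eq_card (hbli.mono huB), hucard]

/-- If a subspace `A` of `ℝ^n` of dimension `d ∈ [1, n-1]` is `(n-d, j)`-irrational, with
`j ∈ [1, min d (n-d)]`, then `A` is `(e, j)`-irrational for every `e ∈ [j, n-j]`. -/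
theorem irrational_of_irrational_codim (n : ℕ) (hn : 2 ≤ n)
    (A : Submodule ℝ (EuclideanSpace ℝ (Fin n))) (d j : ℕ)
    (hA : Module.finrank ℝ A = d) (hd1 : 1 ≤ d) (hd2 : d ≤ n - 1)
    (hj1 : 1 ≤ j) (hj2 : j ≤ min d (n - d))
    (h : IsIrrational A (n - d) j) :
    ∀ e : ℕ, j ≤ e → e ≤ n - j → IsIrrational A e j := by
  intro e he1 he2 B hB hBe
  rw [hA]
  by_contra hcon
  push_neg at hcon
  rcases le_or_gt e (n - d) with hcase | hcase
  · -- extend B to dimension n - d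
    obtain ⟨B', hB'rat, hBB', hB'rank⟩ := exists_rat_ge hB (hBe ▸ hcase) (Nat.sub_le n d)
    have h1 := h B' hB'rat hB'rank
    rw [hA] at h1
    have h2 : Module.finrank ℝ ↥(A ⊓ B) ≤ Module.finrank ℝ ↥(A ⊓ B') :=
      Submodule.finrank_mono (inf_le_inf_left A hBB')
    omega
  · -- shrink B to dimension n - d
    obtain ⟨B', hB'rat, hB'B, hB'rank⟩ := exists_rat_le hB (hBe ▸ hcase.le)
    have h1 := h B' hB'rat hB'rank
    rw [hA] at h1
    -- dim (A ⊓ B) + dim B' ≤ dim ((A ⊓ B) ⊓ B') + dim B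
    have key : Module.finrank ℝ ↥((A ⊓ B) ⊔ B') + Module.finrank ℝ ↥((A ⊓ B) ⊓ B') =
        Module.finrank ℝ ↥(A ⊓ B) + Module.finrank ℝ ↥B' :=
      Submodule.finrank_sup_add_finrank_inf_eq _ _
    have hsup : Module.finrank ℝ ↥((A ⊓ B) ⊔ B') ≤ Module.finrank ℝ ↥B :=
      Submodule.finrank_mono (sup_le (inf_le_right) hB'B)
    have hinf : (A ⊓ B) ⊓ B' = A ⊓ B' := by
      rw [inf_assoc, inf_eq_right.mpr hB'B]
    rw [hinf] at key
    have hd_le : d ≤ n := by omega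
    have hnd : n - d < e := hcase
    rw [hBe] at hsup
    omega
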